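/- lim_{a→∞} [ 9·∫_{-1}^{1} a/[(1+s/√2)²(1+(a²−1)s²)^{11/2}] ds − 144·∫_{-1}^{1} a³s²/[(1+s/√2)²(1+(a²−1)s²)^{11/2}] ds ] = 9·∫_{-∞}^{∞} dt/(t²+1)^{11/2} − 144·∫_{-∞}^{∞} t²/(t²+1)^{11/2} dt = −256/35. -/

import Mathlib

open Real Filter MeasureTheory

/-- `I_{i,j}(a) = ∫_{-1}^1 a^j s^i / ((1 + s/√2)² (1 + (a²−1)s²)^{11/2}) ds`. -/
noncomputable def Iij (i j : ℕ) (a : ℝ) : ℝ :=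
  ∫ s in (-1:ℝ)..1,
    a^j * s^i / ((1 + s/Real.sqrt 2)^2 * (1 + (a^2 - 1)*s^2) ^ ((11:ℝ)/2))

lemma rpow_eleven_half (x : ℝ) (hx : 0 ≤ x) : x ^ ((11:ℝ)/2) = Real.sqrt x ^ (11:ℕ) := by
  rw [Real.sqrt_eq_rpow, ← Real.rpow_natCast (x ^ ((1:ℝ)/2)) 11, ← Real.rpow_mul hx]
  norm_num

lemma sqrt_pos' (t : ℝ) : 0 < Real.sqrt (1 + t^2) := Real.sqrt_pos.mpr (by positivity)

lemma sq_sqrt' (t : ℝ) : Real.sqrt (1 + t^2) ^ 2 = 1 + t^2 := Real.sq_sqrt (by positivity)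

noncomputable def gg (t : ℝ) : ℝ := t / Real.sqrt (1 + t^2)

lemma hasDerivAt_gg (t : ℝ) : HasDerivAt gg ((Real.sqrt (1 + t^2))⁻¹^3) t := by
  have hs := sqrt_pos' t
  have hsq : HasDerivAt (fun t : ℝ => Real.sqrt (1 + t^2)) (t / Real.sqrt (1 + t^2)) t := by
    have h1 : HasDerivAt (fun t : ℝ => 1 + t^2) (2*t) t := by
      simpa using (hasDerivAt_pow 2 t).const_add 1
    have := (Real.hasDerivAt_sqrt (by positivity : (1:ℝ) + t^2 ≠ 0)).comp t h1
    refine this.congr_deriv ?_; field_simp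
  have := (hasDerivAt_id t).div hsq hs.ne'
  refine this.congr_deriv ?_
  have h2 := sq_sqrt' t
  field_simp
  simp only [id]
  nlinarith [h2, hs]

noncomputable def q0 (u : ℝ) : ℝ := u - 4/3*u^3 + 6/5*u^5 - 4/7*u^7 + 1/9*u^9
noncomputable def q2 (u : ℝ) : ℝ := 1/3*u^3 - 3/5*u^5 + 3/7*u^7 - 1/9*u^9

lemma hasDerivAt_q0 (u : ℝ) : HasDerivAt q0 ((1 - u^2)^4) u := by
  have h := ((((hasDerivAt_id u).sub ((hasDerivAt_pow 3 u).const_mul (4/3:ℝ))).add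
      ((hasDerivAt_pow 5 u).const_mul (6/5:ℝ))).sub
      ((hasDerivAt_pow 7 u).const_mul (4/7:ℝ))).add ((hasDerivAt_pow 9 u).const_mul (1/9:ℝ))
  refine h.congr_deriv ?_
  push_cast; ring

lemma hasDerivAt_q2 (u : ℝ) : HasDerivAt q2 (u^2*(1 - u^2)^3) u := by
  have h := ((((hasDerivAt_pow 3 u).const_mul (1/3:ℝ)).sub
      ((hasDerivAt_pow 5 u).const_mul (3/5:ℝ))).add
      ((hasDerivAt_pow 7 u).const_mul (3/7:ℝ))).sub ((hasDerivAt_pow 9 u).const_mul (1/9:ℝ))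
  refine h.congr_deriv ?_
  push_cast; ring

lemma hasDerivAt_F0 (t : ℝ) :
    HasDerivAt (fun t => q0 (gg t)) (1 / (t^2 + 1) ^ ((11:ℝ)/2)) t := by
  have hs := sqrt_pos' t
  have h2 := sq_sqrt' t
  have h := (hasDerivAt_q0 (gg t)).comp t (hasDerivAt_gg t)
  refine h.congr_deriv ?_
  rw [show t^2 + 1 = 1 + t^2 by ring, rpow_eleven_half _ (by positivity)]
  unfold gg
  have h1 : (1 : ℝ) - (t/Real.sqrt (1+t^2))^2 = 1/(Real.sqrt (1+t^2))^2 := by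
    rw [div_pow, h2]; field_simp; ring
  rw [h1]
  field_simp

lemma hasDerivAt_F2 (t : ℝ) :
    HasDerivAt (fun t => q2 (gg t)) (t^2 / (t^2 + 1) ^ ((11:ℝ)/2)) t := by
  have hs := sqrt_pos' t
  have h2 := sq_sqrt' t
  have h := (hasDerivAt_q2 (gg t)).comp t (hasDerivAt_gg t)
  refine h.congr_deriv ?_
  rw [show t^2 + 1 = 1 + t^2 by ring, rpow_eleven_half _ (by positivity)]
  unfold gg
  have h1 : (1 : ℝ) - (t/Real.sqrt (1+t^2))^2 = 1/(Real.sqrt (1+t^2))^2 := by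
    rw [div_pow, h2]; field_simp; ring
  rw [h1]
  field_simp
lemma tendsto_gg_atTop : Tendsto gg atTop (nhds 1) := by
  have h0 : Tendsto (fun t : ℝ => 1 - 1/(1 + t^2)) atTop (nhds 1) := by
    have : Tendsto (fun t : ℝ => 1/(1 + t^2)) atTop (nhds 0) := by
      apply Tendsto.div_atTop tendsto_const_nhds
      exact tendsto_atTop_add_const_left _ 1 (tendsto_pow_atTop two_ne_zero)
    simpa using (tendsto_const_nhds (x := (1:ℝ))).sub this
  have h1 : Tendsto (fun t : ℝ => Real.sqrt (1 - 1/(1 + t^2))) atTop (nhds 1) := by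
    simpa [Function.comp_def] using (Real.continuous_sqrt.continuousAt (x := (1:ℝ))).tendsto.comp h0
  apply h1.congr'
  filter_upwards [eventually_ge_atTop (0:ℝ)] with t ht
  have h2 : (1:ℝ) - 1/(1 + t^2) = t^2/(1 + t^2) := by field_simp; ring
  rw [h2, Real.sqrt_div (by positivity) _, Real.sqrt_sq ht]
  rfl

lemma tendsto_gg_atBot : Tendsto gg atBot (nhds (-1)) := by
  have h : Tendsto (fun t : ℝ => -gg (-t)) atBot (nhds (-1)) := by
    exact (tendsto_gg_atTop.comp tendsto_neg_atBot_atTop).neg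
  apply h.congr
  intro t
  unfold gg
  rw [neg_pow]
  ring_nf
lemma cont_q0 : Continuous q0 := by unfold q0; continuity
lemma cont_q2 : Continuous q2 := by unfold q2; continuity

lemma cont_denom : Continuous (fun t : ℝ => (t^2 + 1) ^ ((11:ℝ)/2)) := by
  apply Continuous.rpow_const (by continuity)
  intro x; left; positivity

lemma denom_pos (t : ℝ) : 0 < (t^2 + 1) ^ ((11:ℝ)/2) := by positivity

lemma denom_ge (t : ℝ) : t^2 + 1 ≤ (t^2 + 1) ^ ((11:ℝ)/2) := by
  nth_rewrite 1 [← Real.rpow_one (t^2+1)]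
  apply Real.rpow_le_rpow_of_exponent_le (by nlinarith [sq_nonneg t]) (by norm_num)

lemma denom_ge_sq (t : ℝ) : (t^2 + 1)^2 ≤ (t^2 + 1) ^ ((11:ℝ)/2) := by
  rw [← Real.rpow_natCast (t^2+1) 2]
  apply Real.rpow_le_rpow_of_exponent_le (by nlinarith [sq_nonneg t]) (by norm_num)

lemma integrable_f0 : Integrable (fun t : ℝ => 1 / (t^2 + 1) ^ ((11:ℝ)/2)) := by
  apply integrable_inv_one_add_sq.mono
  · exact (Continuous.div continuous_const cont_denom fun x => (denom_pos x).ne').aestronglyMeasurable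
  · filter_upwards with t
    rw [Real.norm_eq_abs, Real.norm_eq_abs, abs_of_pos (by positivity), abs_of_pos (by positivity)]
    rw [one_div, inv_le_inv₀ (denom_pos t) (by positivity)]
    calc (1:ℝ) + t^2 = t^2 + 1 := by ring
    _ ≤ _ := denom_ge t

lemma integrable_f2 : Integrable (fun t : ℝ => t^2 / (t^2 + 1) ^ ((11:ℝ)/2)) := by
  apply integrable_inv_one_add_sq.mono
  · exact (Continuous.div (by continuity) cont_denom fun x => (denom_pos x).ne').aestronglyMeasurable
  · filter_upwards with t
    rw [Real.norm_eq_abs, Real.norm_eq_abs, abs_of_nonneg (by positivity), abs_of_pos (by positivity)]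
    rw [show (1:ℝ) + t^2 = t^2 + 1 by ring, ← one_div]
    calc t^2 / (t^2 + 1) ^ ((11:ℝ)/2) ≤ (t^2+1) / ((t^2+1)^2) :=
          div_le_div₀ (by positivity) (by nlinarith [sq_nonneg t]) (by positivity) (denom_ge_sq t)
    _ = 1/(t^2+1) := by
        rw [show ((t:ℝ)^2+1)^2 = (t^2+1)*(t^2+1) from sq _, div_mul_eq_div_div_swap,
          div_self (by positivity : (t:ℝ)^2+1 ≠ 0)]

lemma integral_f0 : ∫ t : ℝ, 1 / (t^2 + 1) ^ ((11:ℝ)/2) = 256/315 := by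
  have := MeasureTheory.integral_of_hasDerivAt_of_tendsto hasDerivAt_F0 integrable_f0
    ((cont_q0.continuousAt (x := (-1:ℝ))).tendsto.comp tendsto_gg_atBot)
    ((cont_q0.continuousAt (x := (1:ℝ))).tendsto.comp tendsto_gg_atTop)
  rw [this]; unfold q0; norm_num

lemma integral_f2 : ∫ t : ℝ, t^2 / (t^2 + 1) ^ ((11:ℝ)/2) = 32/315 := by
  have := MeasureTheory.integral_of_hasDerivAt_of_tendsto hasDerivAt_F2 integrable_f2
    ((cont_q2.continuousAt (x := (-1:ℝ))).tendsto.comp tendsto_gg_atBot)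
    ((cont_q2.continuousAt (x := (1:ℝ))).tendsto.comp tendsto_gg_atTop)
  rw [this]; unfold q2; norm_num
noncomputable def G (i : ℕ) (a t : ℝ) : ℝ :=
  t^i / ((1 + t/(a*Real.sqrt 2))^2 * (1 + (a^2-1)*(t/a)^2) ^ ((11:ℝ)/2))

lemma meas_G (i : ℕ) (a : ℝ) : AEStronglyMeasurable (G i a) volume := by
  unfold G
  apply Measurable.aestronglyMeasurable
  fun_prop

lemma sqrt2_gt_one : (1:ℝ) < Real.sqrt 2 := by
  rw [show (1:ℝ) = Real.sqrt 1 by simp]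
  exact Real.sqrt_lt_sqrt (by norm_num) (by norm_num)

noncomputable def CC : ℝ := (16/9) * (((1 - (Real.sqrt 2)⁻¹)^2)⁻¹)

lemma c1_pos : 0 < (1 - (Real.sqrt 2)⁻¹)^2 := by
  have h := sqrt2_gt_one
  have : (Real.sqrt 2)⁻¹ < 1 := by
    rw [inv_lt_one_iff₀]; right; exact h
  have h2 : (0:ℝ) < 1 - (Real.sqrt 2)⁻¹ := by linarith
  positivity

lemma G_bound (i : ℕ) (hi : ∀ t : ℝ, |t|^i ≤ 4/3*(1+(3/4)*t^2))
    (a t : ℝ) (ha : 2 ≤ a) (ht : |t| ≤ a) : ‖G i a t‖ ≤ CC * (1+t^2)⁻¹ := by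
  have hs2 := sqrt2_gt_one
  have ha0 : (0:ℝ) < a := by linarith
  have hc1 := c1_pos
  set c1 := (1 - (Real.sqrt 2)⁻¹)^2 with hc1def
  -- base of rpow
  set b := 1 + (a^2-1)*(t/a)^2 with hb
  have hb1 : 1 + (3/4)*t^2 ≤ b := by
    rw [hb, div_pow]
    have h0 : (3:ℝ)/4 ≤ (a^2-1)/a^2 := by
      rw [le_div_iff₀ (by positivity)]; nlinarith
    have h1 : (3:ℝ)/4*t^2 ≤ (a^2-1)*(t^2/a^2) := by
      calc (3:ℝ)/4*t^2 ≤ ((a^2-1)/a^2)*t^2 := mul_le_mul_of_nonneg_right h0 (sq_nonneg t)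
      _ = (a^2-1)*(t^2/a^2) := by ring
    linarith
  have hbge1 : (1:ℝ) ≤ b := by
    rw [hb]; nlinarith [sq_nonneg (t/a)]
  -- d2 bound
  have hd2 : (1 + (3/4)*t^2)^2 ≤ b ^ ((11:ℝ)/2) := by
    calc (1 + (3/4)*t^2)^2 ≤ b^2 := by nlinarith [sq_nonneg t]
    _ = b ^ ((2:ℕ):ℝ) := by rw [Real.rpow_natCast]
    _ ≤ b ^ ((11:ℝ)/2) := Real.rpow_le_rpow_of_exponent_le hbge1 (by norm_num)
  have hd2pos : (0:ℝ) < b ^ ((11:ℝ)/2) := Real.rpow_pos_of_pos (by linarith) _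
  -- d1 bound
  have hd1 : c1 ≤ (1 + t/(a*Real.sqrt 2))^2 := by
    have h1 : -(1:ℝ)/Real.sqrt 2 ≤ t/(a*Real.sqrt 2) := by
      rw [div_le_div_iff₀ (by positivity) (by positivity)]
      have : -a ≤ t := abs_le.mp ht |>.1
      nlinarith [Real.sq_sqrt (by norm_num : (0:ℝ) ≤ 2), Real.sqrt_nonneg 2]
    have h2 : (1:ℝ) - (Real.sqrt 2)⁻¹ ≤ 1 + t/(a*Real.sqrt 2) := by
      have : -(1:ℝ)/Real.sqrt 2 = -(Real.sqrt 2)⁻¹ := by ring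
      linarith [this ▸ h1]
    have h3 : (0:ℝ) < 1 - (Real.sqrt 2)⁻¹ := by
      have : (Real.sqrt 2)⁻¹ < 1 := by rw [inv_lt_one_iff₀]; right; exact hs2
      linarith
    exact pow_le_pow_left₀ h3.le h2 2
  have hd1pos : (0:ℝ) < (1 + t/(a*Real.sqrt 2))^2 := lt_of_lt_of_le hc1 hd1
  -- assemble
  have hx : (0:ℝ) < 1 + (3/4)*t^2 := by positivity
  unfold G
  rw [norm_div, norm_pow, Real.norm_eq_abs, Real.norm_eq_abs]
  rw [abs_of_pos (mul_pos hd1pos hd2pos)]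
  calc |t|^i / ((1 + t/(a*Real.sqrt 2))^2 * b ^ ((11:ℝ)/2))
      ≤ (4/3*(1+(3/4)*t^2)) / (c1 * (1+(3/4)*t^2)^2) := by
        apply div_le_div₀ (by positivity) (hi t) (by positivity)
        exact mul_le_mul hd1 hd2 (by positivity) hd1pos.le
    _ ≤ CC * (1+t^2)⁻¹ := by
        rw [div_le_iff₀ (by positivity), CC]
        have key : (4:ℝ)/3*(1+t^2) ≤ 16/9*(1+(3/4)*t^2) := by nlinarith [sq_nonneg t]
        have h2 : (0:ℝ) < 1+t^2 := by positivity
        rw [show (16:ℝ)/9 * c1⁻¹ * (1+t^2)⁻¹ * (c1 * (1+(3/4)*t^2)^2)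
            = (16/9*(1+(3/4)*t^2)) * ((1+(3/4)*t^2) * (1+t^2)⁻¹) * (c1⁻¹ * c1) by ring,
          inv_mul_cancel₀ hc1.ne', mul_one]
        calc (4:ℝ)/3*(1+(3/4)*t^2) = (4/3*(1+t^2)) * ((1+(3/4)*t^2) * (1+t^2)⁻¹) := by
              field_simp
        _ ≤ _ := by
              apply mul_le_mul_of_nonneg_right key (by positivity)
lemma CC_pos : 0 < CC := by
  unfold CC
  have := c1_pos
  positivity

lemma Iij_eq (i : ℕ) (a : ℝ) (ha : 0 < a) :
    Iij i (i+1) a = ∫ t : ℝ, (Set.Ioc (-a) a).indicator (G i a) t := by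
  have h1 : ∀ s : ℝ, a^(i+1) * s^i / ((1 + s/Real.sqrt 2)^2 * (1 + (a^2 - 1)*s^2) ^ ((11:ℝ)/2))
      = a * G i a (a * s) := by
    intro s
    unfold G
    have e1 : a*s/(a*Real.sqrt 2) = s/Real.sqrt 2 := mul_div_mul_left _ _ ha.ne'
    have e2 : a*s/a = s := by field_simp
    rw [e1, e2, mul_pow]
    rw [pow_succ]
    ring
  calc Iij i (i+1) a = ∫ s in (-1:ℝ)..1, a * G i a (a*s) := by
        unfold Iij; exact intervalIntegral.integral_congr (fun s _ => h1 s)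
  _ = a • ∫ s in (-1:ℝ)..1, G i a (a*s) := by
        rw [intervalIntegral.integral_const_mul]; rfl
  _ = ∫ t in (a*(-1))..(a*1), G i a t := intervalIntegral.smul_integral_comp_mul_left _ _
  _ = ∫ t in Set.Ioc (-a) a, G i a t := by
        rw [show a*(-1) = -a by ring, mul_one, intervalIntegral.integral_of_le (by linarith)]
  _ = _ := (integral_indicator measurableSet_Ioc).symm

lemma tendsto_G (i : ℕ) (t : ℝ) :
    Tendsto (fun a => G i a t) atTop (nhds (t^i / (t^2+1) ^ ((11:ℝ)/2))) := by
  have hs2 : (0:ℝ) < Real.sqrt 2 := by positivity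
  have h1 : Tendsto (fun a : ℝ => 1 + t/(a*Real.sqrt 2)) atTop (nhds 1) := by
    have h0 : Tendsto (fun a : ℝ => t/(a*Real.sqrt 2)) atTop (nhds 0) :=
      Tendsto.div_atTop tendsto_const_nhds (Tendsto.atTop_mul_const hs2 tendsto_id)
    simpa using (tendsto_const_nhds (x := (1:ℝ))).add h0
  have h2 : Tendsto (fun a : ℝ => 1 + (a^2-1)*(t/a)^2) atTop (nhds (1 + t^2)) := by
    have ha : Tendsto (fun a : ℝ => a⁻¹) atTop (nhds 0) := tendsto_inv_atTop_zero
    have key : Tendsto (fun a : ℝ => 1 + (t^2 - t^2*(a⁻¹)^2)) atTop (nhds (1 + t^2)) := by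
      have := ((tendsto_const_nhds (x := t^2)).mul (ha.pow 2))
      have h3 := (tendsto_const_nhds (x := t^2)).sub this
      simpa using (tendsto_const_nhds (x := (1:ℝ))).add h3
    apply key.congr'
    filter_upwards [eventually_gt_atTop (0:ℝ)] with a ha0
    rw [div_pow]
    field_simp
  have h3 : Tendsto (fun a : ℝ => (1 + (a^2-1)*(t/a)^2) ^ ((11:ℝ)/2)) atTop
      (nhds ((1+t^2) ^ ((11:ℝ)/2))) := h2.rpow_const (Or.inl (by positivity))
  have h4 := (h1.pow 2).mul h3
  have h5 := (tendsto_const_nhds (x := (t:ℝ)^i)).div h4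
      (by positivity : (1:ℝ)^2 * (1+t^2) ^ ((11:ℝ)/2) ≠ 0)
  unfold G
  rw [one_pow, one_mul, add_comm 1 (t^2)] at h5
  exact h5

lemma tendsto_Iij (i : ℕ) (hi : ∀ t : ℝ, |t|^i ≤ 4/3*(1+(3/4)*t^2)) :
    Tendsto (fun a => Iij i (i+1) a) atTop
      (nhds (∫ t : ℝ, t^i / (t^2+1) ^ ((11:ℝ)/2))) := by
  have key : Tendsto (fun a : ℝ => ∫ t : ℝ, (Set.Ioc (-a) a).indicator (G i a) t) atTop
      (nhds (∫ t : ℝ, t^i / (t^2+1) ^ ((11:ℝ)/2))) := by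
    apply tendsto_integral_filter_of_dominated_convergence (fun t => CC * (1+t^2)⁻¹)
    · filter_upwards with a
      exact (meas_G i a).indicator measurableSet_Ioc
    · filter_upwards [eventually_ge_atTop (2:ℝ)] with a ha
      filter_upwards with t
      by_cases h : t ∈ Set.Ioc (-a) a
      · rw [Set.indicator_of_mem h]
        exact G_bound i hi a t ha (abs_le.mpr ⟨by linarith [h.1], h.2⟩)
      · rw [Set.indicator_of_notMem h]
        simp only [norm_zero]
        exact mul_nonneg CC_pos.le (by positivity)
    · exact integrable_inv_one_add_sq.const_mul CC
    · filter_upwards with t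
      apply (tendsto_G i t).congr'
      filter_upwards [eventually_gt_atTop (|t|:ℝ)] with a ha
      rw [Set.indicator_of_mem]
      exact ⟨by have := abs_le.mp ha.le; linarith [neg_abs_le t], (le_abs_self t).trans ha.le⟩
  apply key.congr'
  filter_upwards [eventually_gt_atTop (0:ℝ)] with a ha
  exact (Iij_eq i a ha).symm
/-- `lim_{a→∞} (9 I_{0,1}(a) − 144 I_{2,3}(a)) = 9∫(t²+1)^{-11/2} − 144∫t²(t²+1)^{-11/2}
 = −256/35`. -/
theorem stmt_8 :
    Tendsto (fun a : ℝ => 9 * Iij 0 1 a - 144 * Iij 2 3 a) atTop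
      (nhds (9 * (∫ t : ℝ, 1 / (t^2 + 1) ^ ((11:ℝ)/2))
        - 144 * (∫ t : ℝ, t^2 / (t^2 + 1) ^ ((11:ℝ)/2)))) ∧
    9 * (∫ t : ℝ, 1 / (t^2 + 1) ^ ((11:ℝ)/2))
        - 144 * (∫ t : ℝ, t^2 / (t^2 + 1) ^ ((11:ℝ)/2)) = -256/35 := by
  constructor
  · have T0 := tendsto_Iij 0 (by intro t; norm_num; nlinarith [sq_nonneg t])
    have T2 := tendsto_Iij 2 (by intro t; rw [sq_abs]; nlinarith [sq_nonneg t])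
    have h0 : (∫ t : ℝ, t^(0:ℕ) / (t^2+1) ^ ((11:ℝ)/2)) = ∫ t : ℝ, 1 / (t^2+1) ^ ((11:ℝ)/2) := by
      simp only [pow_zero]
    rw [h0] at T0
    exact (T0.const_mul 9).sub (T2.const_mul 144)
  · rw [integral_f0, integral_f2]
    norm_num
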